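/- Let F be an n×n real Metzler matrix (all off-diagonal entries nonnegative) that is Hurwitz stable. Then F is invertible and every entry of the matrix −F⁻¹ is nonnegative. -/

import Mathlib

open Matrix Filter
open scoped ENNReal NNReal

attribute [local instance] Matrix.linftyOpNormedRing Matrix.linftyOpNormedAlgebra

private lemma mhn_geom_aux {A : Type*} [Ring A] (x : A) (N : ℕ) :
    (1 - x) * (∑ k ∈ Finset.range N, x ^ k) = 1 - x ^ N := by
  induction N with
  | zero => simp
  | succ N ih =>
    rw [Finset.sum_range_succ, mul_add, ih, one_sub_mul, ← pow_succ']
    abel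

private lemma mhn_pow_entry_nonneg {n : ℕ} {B : Matrix (Fin n) (Fin n) ℝ}
    (hB : ∀ i j, 0 ≤ B i j) (k : ℕ) : ∀ i j, 0 ≤ (B ^ k) i j := by
  induction k with
  | zero =>
    intro i j
    rcases eq_or_ne i j with h | h <;> simp [pow_zero, Matrix.one_apply, h]
  | succ k ih =>
    intro i j
    rw [pow_succ, Matrix.mul_apply]
    exact Finset.sum_nonneg fun l _ => mul_nonneg (ih i l) (hB l j)

private lemma mhn_entry_le_norm {n : ℕ} (A : Matrix (Fin n) (Fin n) ℂ) (i j : Fin n) :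
    ‖A i j‖ ≤ ‖A‖ := by
  have h1 : ‖A i j‖₊ ≤ ∑ j' : Fin n, ‖A i j'‖₊ :=
    Finset.single_le_sum (f := fun j' => ‖A i j'‖₊) (fun _ _ => zero_le) (Finset.mem_univ j)
  have h2 : (∑ j' : Fin n, ‖A i j'‖₊) ≤ ‖A‖₊ := by
    have h3 := Matrix.linfty_opNNNorm_def (α := ℂ) (m := Fin n) (n := Fin n) A
    have h4 : (∑ j' : Fin n, ‖A i j'‖₊) ≤
        (Finset.univ : Finset (Fin n)).sup fun i => ∑ j' : Fin n, ‖A i j'‖₊ :=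
      Finset.le_sup (f := fun i => ∑ j' : Fin n, ‖A i j'‖₊) (Finset.mem_univ i)
    exact h4.trans h3.ge
  exact_mod_cast h1.trans h2

private lemma mhn_map_pow {n : ℕ} (A : Matrix (Fin n) (Fin n) ℝ) (k : ℕ) :
    (A ^ k).map (Complex.ofReal ·) = (A.map (Complex.ofReal ·)) ^ k := by
  have h : ∀ P : Matrix (Fin n) (Fin n) ℝ,
      P.map (Complex.ofReal ·) = Complex.ofRealHom.mapMatrix P := fun _ => rfl
  rw [h, h, map_pow]

private lemma mhn_map_mul {n : ℕ} (P Q : Matrix (Fin n) (Fin n) ℝ) :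
    (P * Q).map (Complex.ofReal ·) = P.map (Complex.ofReal ·) * Q.map (Complex.ofReal ·) := by
  have h : ∀ P : Matrix (Fin n) (Fin n) ℝ,
      P.map (Complex.ofReal ·) = Complex.ofRealHom.mapMatrix P := fun _ => rfl
  rw [h, h, h, _root_.map_mul]

private lemma mhn_map_one {n : ℕ} :
    (1 : Matrix (Fin n) (Fin n) ℝ).map (Complex.ofReal ·) = 1 := by
  have h : ∀ P : Matrix (Fin n) (Fin n) ℝ,
      P.map (Complex.ofReal ·) = Complex.ofRealHom.mapMatrix P := fun _ => rfl
  rw [h, _root_.map_one]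

set_option maxHeartbeats 1000000 in
/-- A Hurwitz stable Metzler matrix `F` is invertible and `-F⁻¹` is entrywise nonnegative. -/
theorem metzler_hurwitz_neg_inv_nonneg
    (n : ℕ) (F : Matrix (Fin n) (Fin n) ℝ)
    (hMetzler : ∀ i j, i ≠ j → 0 ≤ F i j)
    (hHurwitz : ∀ z ∈ spectrum ℂ (F.map (Complex.ofReal ·)), z.re < 0) :
    IsUnit F ∧ ∀ i j, 0 ≤ (-(F⁻¹)) i j := by
  rcases Nat.eq_zero_or_pos n with hn | hn
  · subst hn
    refine ⟨?_, fun i _ => i.elim0⟩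
    haveI : Subsingleton (Matrix (Fin 0) (Fin 0) ℝ) := ⟨fun a b => by ext i; exact i.elim0⟩
    rw [Subsingleton.elim F 1]
    exact isUnit_one
  haveI : Nonempty (Fin n) := ⟨⟨0, hn⟩⟩
  haveI : CompleteSpace (Matrix (Fin n) (Fin n) ℂ) := FiniteDimensional.complete ℂ _
  set M : Matrix (Fin n) (Fin n) ℂ := F.map (Complex.ofReal ·) with hM
  -- a uniform negative upper bound for the real parts of the spectrum
  obtain ⟨d, hd0, hdspec⟩ : ∃ d : ℝ, 0 < d ∧ ∀ lam ∈ spectrum ℂ M, lam.re ≤ -d := by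
    obtain ⟨z₀, hz₀, hmaxz⟩ := (spectrum.isCompact (𝕜 := ℂ) M).exists_isMaxOn
      (spectrum.nonempty M) Complex.continuous_re.continuousOn
    exact ⟨-z₀.re, by simpa using hHurwitz z₀ hz₀, fun lam hlam => by
      simpa using hmaxz hlam⟩
  obtain ⟨R, hR0, hRnorm, hRspec⟩ : ∃ R : ℝ, 0 ≤ R ∧ (∀ i, |F i i| ≤ R) ∧
      ∀ lam ∈ spectrum ℂ M, ‖lam‖ ≤ R := by
    refine ⟨‖M‖, norm_nonneg M, fun i => ?_, fun lam hlam =>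
      spectrum.norm_le_norm_of_mem hlam⟩
    have := mhn_entry_le_norm M i i
    simpa [hM, Matrix.map_apply] using this
  obtain ⟨α, hα0, hαR, hα2⟩ : ∃ α : ℝ, 0 < α ∧ R < α ∧ R ^ 2 < 2 * d * α := by
    refine ⟨1 + max R (R ^ 2 / (2 * d)), ?_, ?_, ?_⟩
    · have := (le_max_left R (R ^ 2 / (2 * d))).trans' hR0
      linarith
    · have := le_max_left R (R ^ 2 / (2 * d))
      linarith
    · have h1 : R ^ 2 / (2 * d) < 1 + max R (R ^ 2 / (2 * d)) := by
        have := le_max_right R (R ^ 2 / (2 * d))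
        linarith
      have h2 : R ^ 2 / (2 * d) * (2 * d) = R ^ 2 := by field_simp
      nlinarith
  have hαC : (α : ℂ) ≠ 0 := by exact_mod_cast hα0.ne'
  -- the nonnegative matrix B = F + αI
  set B : Matrix (Fin n) (Fin n) ℝ := F + α • 1 with hB
  have hBnn : ∀ i j, 0 ≤ B i j := by
    intro i j
    rcases eq_or_ne i j with rfl | h
    · have h1 : -R ≤ F i i := neg_le_of_abs_le (hRnorm i)
      simp only [hB, Matrix.add_apply, Matrix.smul_apply, Matrix.one_apply_eq, smul_eq_mul,
        mul_one]
      linarith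
    · simpa [hB, Matrix.add_apply, Matrix.smul_apply, Matrix.one_apply, h] using hMetzler i j h
  set Bc : Matrix (Fin n) (Fin n) ℂ := B.map (Complex.ofReal ·) with hBc
  have hBcM : Bc = algebraMap ℂ (Matrix (Fin n) (Fin n) ℂ) (α : ℂ) + M := by
    ext i j
    rcases eq_or_ne i j with rfl | h
    · simp [hBc, hB, hM, Matrix.map_apply, Matrix.add_apply, Matrix.smul_apply,
        Matrix.one_apply_eq, Matrix.algebraMap_matrix_apply]
      ring
    · simp [hBc, hB, hM, Matrix.map_apply, Matrix.add_apply, Matrix.smul_apply,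
        Matrix.one_apply, Matrix.algebraMap_matrix_apply, h]
  set x : Matrix (Fin n) (Fin n) ℂ := ((α : ℂ))⁻¹ • Bc with hx
  -- norm bound on the spectrum of x
  set t : ℝ := Real.sqrt (α ^ 2 - 2 * d * α + R ^ 2) / α with ht
  have hr2lt : α ^ 2 - 2 * d * α + R ^ 2 < α ^ 2 := by linarith
  have ht1 : t < 1 := by
    rw [ht, div_lt_one hα0]
    rcases le_or_gt (α ^ 2 - 2 * d * α + R ^ 2) 0 with h | h
    · calc Real.sqrt (α ^ 2 - 2 * d * α + R ^ 2) = 0 := Real.sqrt_eq_zero_of_nonpos h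
        _ < α := hα0
    · calc Real.sqrt (α ^ 2 - 2 * d * α + R ^ 2) < Real.sqrt (α ^ 2) :=
          Real.sqrt_lt_sqrt h.le hr2lt
        _ = α := Real.sqrt_sq hα0.le
  have ht0 : 0 ≤ t := div_nonneg (Real.sqrt_nonneg _) hα0.le
  have hspec : ∀ μ ∈ spectrum ℂ x, ‖μ‖ ≤ t := by
    intro μ hμ
    set u : ℂˣ := Units.mk0 (α : ℂ) hαC with hu
    have hxu : x = u⁻¹ • Bc := by
      rw [hx, Units.smul_def]
      congr 1
    rw [hxu, spectrum.unit_smul_eq_smul, Set.mem_inv_smul_set_iff] at hμ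
    have hμ' : (α : ℂ) * μ ∈ spectrum ℂ Bc := by
      simpa [hu, Units.smul_def, smul_eq_mul] using hμ
    rw [hBcM, ← spectrum.singleton_add_eq] at hμ'
    obtain ⟨a, ha, lam, hlam, heq⟩ := Set.mem_add.mp hμ'
    rw [Set.mem_singleton_iff] at ha
    subst ha
    have hcalc : ‖(α : ℂ) + lam‖ ^ 2 = α ^ 2 + 2 * α * lam.re + ‖lam‖ ^ 2 := by
      rw [Complex.sq_norm, Complex.sq_norm,
        Complex.normSq_apply, Complex.normSq_apply]
      simp [Complex.add_re, Complex.add_im]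
      ring
    have hb1 : ‖lam‖ ^ 2 ≤ R ^ 2 := by
      have := hRspec lam hlam
      nlinarith [norm_nonneg lam]
    have hb2 : lam.re ≤ -d := hdspec lam hlam
    have hnorm2 : ‖(α : ℂ) + lam‖ ^ 2 ≤ α ^ 2 - 2 * d * α + R ^ 2 := by nlinarith
    have hle : ‖(α : ℂ) + lam‖ ≤ Real.sqrt (α ^ 2 - 2 * d * α + R ^ 2) := by
      have := Real.sqrt_le_sqrt hnorm2
      rwa [Real.sqrt_sq (norm_nonneg _)] at this
    have hμnorm : α * ‖μ‖ = ‖(α : ℂ) + lam‖ := by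
      rw [heq, norm_mul, Complex.norm_real]
      simp [abs_of_pos hα0]
    rw [ht, le_div_iff₀ hα0]
    calc ‖μ‖ * α = α * ‖μ‖ := mul_comm _ _
      _ = ‖(α : ℂ) + lam‖ := hμnorm
      _ ≤ _ := hle
  -- spectral radius < s < 1
  set s : ℝ := (t + 1) / 2 with hs
  have hts : t < s := by rw [hs]; linarith
  have hs1 : s < 1 := by rw [hs]; linarith
  have hs0 : 0 < s := by rw [hs]; linarith
  have hρ : spectralRadius ℂ x < (s.toNNReal : ℝ≥0∞) := by
    apply spectrum.spectralRadius_lt_of_forall_lt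
    intro z hz
    have h1 : ‖z‖ < s := lt_of_le_of_lt (hspec z hz) hts
    have h2 : Real.toNNReal ‖z‖ < Real.toNNReal s :=
      (Real.toNNReal_lt_toNNReal_iff hs0).mpr h1
    rwa [norm_toNNReal] at h2
  -- Gelfand's formula gives geometric decay of ‖x^N‖
  have hgel := spectrum.pow_nnnorm_pow_one_div_tendsto_nhds_spectralRadius x
  have hev : ∀ᶠ N : ℕ in atTop, ((‖x ^ N‖₊ : ℝ≥0∞)) ^ (1 / (N : ℝ)) < (s.toNNReal : ℝ≥0∞) :=
    hgel.eventually_lt_const hρ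
  have hbound : ∀ᶠ N : ℕ in atTop, ‖x ^ N‖ ≤ s ^ N := by
    filter_upwards [hev, eventually_ge_atTop 1] with N h1 h2
    have hN : (1 / (N : ℝ)) * (N : ℝ) = 1 := by
      rw [one_div_mul_cancel]
      exact_mod_cast Nat.one_le_iff_ne_zero.mp h2
    have h3 : ((‖x ^ N‖₊ : ℝ≥0∞)) = (((‖x ^ N‖₊ : ℝ≥0∞)) ^ (1 / (N : ℝ))) ^ (N : ℝ) := by
      rw [← ENNReal.rpow_mul, hN, ENNReal.rpow_one]
    have h5 : ‖x ^ N‖₊ ≤ s.toNNReal ^ N := by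
      have h4 : (‖x ^ N‖₊ : ℝ≥0∞) ≤ ((s.toNNReal ^ N : ℝ≥0) : ℝ≥0∞) := by
        calc (‖x ^ N‖₊ : ℝ≥0∞) = (((‖x ^ N‖₊ : ℝ≥0∞)) ^ (1 / (N : ℝ))) ^ (N : ℝ) := h3
          _ ≤ ((s.toNNReal : ℝ≥0∞)) ^ (N : ℝ) := ENNReal.rpow_le_rpow h1.le (by positivity)
          _ = ((s.toNNReal ^ N : ℝ≥0) : ℝ≥0∞) := by rw [ENNReal.rpow_natCast, ENNReal.coe_pow]
      exact_mod_cast h4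
    calc ‖x ^ N‖ = ((‖x ^ N‖₊ : ℝ≥0) : ℝ) := rfl
      _ ≤ ((s.toNNReal ^ N : ℝ≥0) : ℝ) := by exact_mod_cast h5
      _ = s ^ N := by rw [NNReal.coe_pow, Real.coe_toNNReal _ hs0.le]
  -- Neumann series
  have hxsum : Summable (fun N : ℕ => x ^ N) :=
    Summable.of_norm_bounded_eventually_nat
      (summable_geometric_of_lt_one hs0.le hs1) hbound
  have hx0 : Tendsto (fun N : ℕ => x ^ N) atTop (nhds 0) :=
    squeeze_zero_norm' hbound (tendsto_pow_atTop_nhds_zero_of_lt_one hs0.le hs1)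
  set S : Matrix (Fin n) (Fin n) ℂ := ∑' k : ℕ, x ^ k with hSdef
  have hPS : Tendsto (fun N : ℕ => ∑ k ∈ Finset.range N, x ^ k) atTop (nhds S) :=
    hxsum.hasSum.tendsto_sum_nat
  have hmulS : (1 - x) * S = 1 := by
    have h1 : Tendsto (fun N : ℕ => (1 - x) * ∑ k ∈ Finset.range N, x ^ k) atTop
        (nhds ((1 - x) * S)) := hPS.const_mul _
    have h1' : Tendsto (fun N : ℕ => 1 - x ^ N) atTop (nhds ((1 - x) * S)) := by
      apply h1.congr
      intro N
      exact mhn_geom_aux x N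
    have h2 : Tendsto (fun N : ℕ => 1 - x ^ N) atTop
        (nhds ((1 : Matrix (Fin n) (Fin n) ℂ) - 0)) := tendsto_const_nhds.sub hx0
    rw [sub_zero] at h2
    exact tendsto_nhds_unique h1' h2
  -- the complexification of -F is α • (1 - x)
  have hαx : (α : ℂ) • x = Bc := by
    rw [hx, smul_smul, mul_inv_cancel₀ hαC, one_smul]
  have hNF : (-F).map (Complex.ofReal ·) = (α : ℂ) • (1 - x) := by
    rw [smul_sub, hαx, hBc]
    ext i j
    rcases eq_or_ne i j with rfl | h
    · simp [hB, Matrix.map_apply, Matrix.sub_apply, Matrix.add_apply, Matrix.smul_apply,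
        Matrix.one_apply_eq, Matrix.neg_apply]
    · simp [hB, Matrix.map_apply, Matrix.sub_apply, Matrix.add_apply, Matrix.smul_apply,
        Matrix.one_apply, Matrix.neg_apply, h]
  set T : Matrix (Fin n) (Fin n) ℂ := ((α : ℂ))⁻¹ • S with hT
  have hT1 : ((-F).map (Complex.ofReal ·)) * T = 1 := by
    rw [hNF, hT, smul_mul_smul_comm, mul_inv_cancel₀ hαC, one_smul, hmulS]
  -- invertibility over ℝ
  have hdetC : ((-F).map (Complex.ofReal ·)).det ≠ 0 := by
    intro h
    have := congrArg Matrix.det hT1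
    rw [Matrix.det_mul, h, zero_mul] at this
    simp at this
  have hdetR : (-F).det ≠ 0 := by
    intro h
    apply hdetC
    have := Complex.ofRealHom.map_det (-F)
    rw [h] at this
    exact (by simpa using this.symm : ((-F).map ⇑Complex.ofRealHom).det = 0)
  have hdetF : IsUnit F.det := by
    rw [isUnit_iff_ne_zero]
    intro h
    apply hdetR
    rw [Matrix.det_neg, h, mul_zero]
  have hUnitF : IsUnit F := (Matrix.isUnit_iff_isUnit_det F).mpr hdetF
  refine ⟨hUnitF, ?_⟩
  have hNFdet : IsUnit (-F).det := isUnit_iff_ne_zero.mpr hdetR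
  have hneg : (-F)⁻¹ = -(F⁻¹) := by
    apply Matrix.inv_eq_right_inv
    rw [neg_mul_neg]
    exact Matrix.mul_nonsing_inv F hdetF
  have hGc : ((-F)⁻¹).map (Complex.ofReal ·) = T := by
    have h1 : ((-F).map (Complex.ofReal ·)) * (((-F)⁻¹).map (Complex.ofReal ·)) = 1 := by
      rw [← mhn_map_mul, Matrix.mul_nonsing_inv _ hNFdet, mhn_map_one]
    rw [← Matrix.inv_eq_right_inv h1, Matrix.inv_eq_right_inv hT1]
  intro i j
  rw [← hneg]
  -- entries of S have nonnegative real part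
  set φ : Matrix (Fin n) (Fin n) ℂ →ₗ[ℂ] ℂ :=
    { toFun := fun A => A i j, map_add' := fun _ _ => rfl, map_smul' := fun _ _ => rfl } with hφ
  have hφc : Continuous φ := φ.continuous_of_finiteDimensional
  have hTend : Tendsto (fun N : ℕ => φ (∑ k ∈ Finset.range N, x ^ k)) atTop (nhds (φ S)) :=
    (hφc.tendsto S).comp hPS
  have hTendre : Tendsto (fun N : ℕ => (φ (∑ k ∈ Finset.range N, x ^ k)).re) atTop
      (nhds ((φ S).re)) := (Complex.continuous_re.tendsto _).comp hTend
  have hterm : ∀ k : ℕ, φ (x ^ k) = (((α⁻¹) ^ k * (B ^ k) i j : ℝ) : ℂ) := by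
    intro k
    have hxk : x ^ k = (((α : ℂ))⁻¹) ^ k • ((B ^ k).map (Complex.ofReal ·)) := by
      rw [hx, smul_pow, mhn_map_pow]
    rw [hxk]
    show (((α : ℂ))⁻¹) ^ k * ((B ^ k).map (Complex.ofReal ·)) i j = _
    push_cast
    rw [Matrix.map_apply]
  have hentry : ∀ N : ℕ, 0 ≤ (φ (∑ k ∈ Finset.range N, x ^ k)).re := by
    intro N
    rw [map_sum, Complex.re_sum]
    apply Finset.sum_nonneg
    intro k _
    rw [hterm k, Complex.ofReal_re]
    exact mul_nonneg (pow_nonneg (inv_nonneg.mpr hα0.le) k)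
      (mhn_pow_entry_nonneg hBnn k i j)
  have hSre : 0 ≤ (φ S).re := ge_of_tendsto hTendre (Eventually.of_forall hentry)
  have hentryT : ((-F)⁻¹) i j = α⁻¹ * (φ S).re := by
    have h1 : (((-F)⁻¹) i j : ℂ) = T i j := by
      rw [← hGc, Matrix.map_apply]
    have h2 : T i j = ((α : ℂ))⁻¹ * S i j := rfl
    have h3 : (φ S) = S i j := rfl
    have := congrArg Complex.re (h1.trans h2)
    rw [Complex.ofReal_re] at this
    rw [this, h3]
    have h4 : ((α : ℂ))⁻¹ = ((α⁻¹ : ℝ) : ℂ) := by push_cast; ring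
    rw [h4, Complex.re_ofReal_mul]
  rw [hentryT]
  exact mul_nonneg (inv_nonneg.mpr hα0.le) hSre
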